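/- Let ν > 1 and β ≥ 0. Then there exists a constant c_ν depending only on ν such that for all integers s, m: ∑_{k∈ℤ} e^{-β|s-k| - β|k-m|} / (⟨s-k⟩^ν ⟨k-m⟩^ν) ≤ c_ν e^{-β|s-m|} / ⟨s-m⟩^ν, where ⟨k⟩ = |k| + 1. -/

import Mathlib

open Real

/-- ⟨k⟩ = |k| + 1 -/
noncomputable def br (k : ℤ) : ℝ := |(k : ℝ)| + 1

lemma br_pos (k : ℤ) : 0 < br k := by
  unfold br; positivity

lemma one_le_br (k : ℤ) : 1 ≤ br k := by
  unfold br; have := abs_nonneg ((k : ℝ)); linarith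

lemma br_rpow_pos (ν : ℝ) (k : ℤ) : 0 < br k ^ ν := Real.rpow_pos_of_pos (br_pos k) ν

lemma summable_br (ν : ℝ) (hν : 1 < ν) : Summable (fun k : ℤ => 1 / br k ^ ν) := by
  apply Summable.of_nat_of_neg_add_one
  · have h := (Real.summable_one_div_nat_add_rpow 1 ν).2 hν
    refine h.congr fun n => ?_
    have : |(n : ℝ) + 1| = |((n : ℤ) : ℝ)| + 1 := by
      rw [abs_of_nonneg (by positivity)]
      simp [abs_of_nonneg (by positivity : (0:ℝ) ≤ (n:ℝ))]
    rw [this]; rfl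
  · have h := (Real.summable_one_div_nat_add_rpow 2 ν).2 hν
    refine h.congr fun n => ?_
    have : |(n : ℝ) + 2| = |((-(n + 1) : ℤ) : ℝ)| + 1 := by
      push_cast
      rw [abs_of_nonneg (by positivity), abs_of_nonpos (by linarith)]
      ring
    rw [this]; rfl

lemma key_bound (ν : ℝ) (hν : 0 < ν) (β : ℝ) (hβ : 0 ≤ β) (a b : ℤ) :
    Real.exp (-β * |(a : ℝ)| - β * |(b : ℝ)|) / (br a ^ ν * br b ^ ν)
      ≤ Real.exp (-β * |((a + b : ℤ) : ℝ)|) * ((2 : ℝ) ^ ν / br (a + b) ^ ν)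
          * (1 / br a ^ ν + 1 / br b ^ ν) := by
  have hexp : Real.exp (-β * |(a : ℝ)| - β * |(b : ℝ)|)
      ≤ Real.exp (-β * |((a + b : ℤ) : ℝ)|) := by
    apply Real.exp_le_exp.2
    have habs : |((a + b : ℤ) : ℝ)| ≤ |(a : ℝ)| + |(b : ℝ)| := by
      push_cast; exact abs_add_le _ _
    nlinarith
  have hden : 1 / (br a ^ ν * br b ^ ν)
      ≤ (2 : ℝ) ^ ν / br (a + b) ^ ν * (1 / br a ^ ν + 1 / br b ^ ν) := by
    have hab : br (a + b) ≤ br a + br b := by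
      unfold br
      have : |((a + b : ℤ) : ℝ)| ≤ |(a : ℝ)| + |(b : ℝ)| := by
        push_cast; exact abs_add_le _ _
      linarith
    rcases le_total (br a) (br b) with h | h
    · have h2 : br (a + b) ≤ 2 * br b := by linarith
      have h3 : br (a + b) ^ ν ≤ (2 * br b) ^ ν :=
        Real.rpow_le_rpow (br_pos _).le h2 hν.le
      rw [Real.mul_rpow (by norm_num) (br_pos b).le] at h3
      have h4 : 1 / br b ^ ν ≤ (2:ℝ) ^ ν / br (a + b) ^ ν := by
        rw [div_le_div_iff₀ (br_rpow_pos ν b) (br_rpow_pos ν (a+b))]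
        linarith
      calc 1 / (br a ^ ν * br b ^ ν) = (1 / br b ^ ν) * (1 / br a ^ ν) := by
            field_simp
        _ ≤ ((2:ℝ) ^ ν / br (a + b) ^ ν) * (1 / br a ^ ν) := by
            exact mul_le_mul_of_nonneg_right h4 (one_div_nonneg.2 (br_rpow_pos ν a).le)
        _ ≤ (2 : ℝ) ^ ν / br (a + b) ^ ν * (1 / br a ^ ν + 1 / br b ^ ν) := by
            apply mul_le_mul_of_nonneg_left _
              (div_nonneg (Real.rpow_nonneg (by norm_num) ν) (br_rpow_pos ν (a+b)).le)
            have : 0 < 1 / br b ^ ν := one_div_pos.2 (br_rpow_pos ν b)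
            linarith
    · have h2 : br (a + b) ≤ 2 * br a := by linarith
      have h3 : br (a + b) ^ ν ≤ (2 * br a) ^ ν :=
        Real.rpow_le_rpow (br_pos _).le h2 hν.le
      rw [Real.mul_rpow (by norm_num) (br_pos a).le] at h3
      have h4 : 1 / br a ^ ν ≤ (2:ℝ) ^ ν / br (a + b) ^ ν := by
        rw [div_le_div_iff₀ (br_rpow_pos ν a) (br_rpow_pos ν (a+b))]
        linarith
      calc 1 / (br a ^ ν * br b ^ ν) = (1 / br a ^ ν) * (1 / br b ^ ν) := by
            field_simp
        _ ≤ ((2:ℝ) ^ ν / br (a + b) ^ ν) * (1 / br b ^ ν) := by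
            exact mul_le_mul_of_nonneg_right h4 (one_div_nonneg.2 (br_rpow_pos ν b).le)
        _ ≤ (2 : ℝ) ^ ν / br (a + b) ^ ν * (1 / br a ^ ν + 1 / br b ^ ν) := by
            apply mul_le_mul_of_nonneg_left _
              (div_nonneg (Real.rpow_nonneg (by norm_num) ν) (br_rpow_pos ν (a+b)).le)
            have : 0 < 1 / br a ^ ν := one_div_pos.2 (br_rpow_pos ν a)
            linarith
  calc Real.exp (-β * |(a : ℝ)| - β * |(b : ℝ)|) / (br a ^ ν * br b ^ ν)
      = Real.exp (-β * |(a : ℝ)| - β * |(b : ℝ)|) * (1 / (br a ^ ν * br b ^ ν)) := by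
        ring
    _ ≤ Real.exp (-β * |((a + b : ℤ) : ℝ)|)
          * ((2 : ℝ) ^ ν / br (a + b) ^ ν * (1 / br a ^ ν + 1 / br b ^ ν)) := by
        exact mul_le_mul hexp hden (one_div_nonneg.2 (mul_nonneg (br_rpow_pos ν a).le (br_rpow_pos ν b).le)) (Real.exp_pos _).le
    _ = _ := by ring

theorem conv_lemma (ν : ℝ) (hν : 1 < ν) :
    ∃ c : ℝ, 0 < c ∧ ∀ β : ℝ, 0 ≤ β → ∀ s m : ℤ,
      ∑' k : ℤ, Real.exp (-β * |((s - k : ℤ) : ℝ)| - β * |((k - m : ℤ) : ℝ)|) /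
          (br (s - k) ^ ν * br (k - m) ^ ν)
        ≤ c * Real.exp (-β * |((s - m : ℤ) : ℝ)|) / br (s - m) ^ ν := by
  have hsum := summable_br ν hν
  set C : ℝ := ∑' k : ℤ, 1 / br k ^ ν with hC
  have hCpos : 0 < C :=
    Summable.tsum_pos hsum (fun k => one_div_nonneg.2 (br_rpow_pos ν k).le) 0
      (one_div_pos.2 (br_rpow_pos ν 0))
  refine ⟨2 ^ ν * (2 * C), by positivity, fun β hβ s m => ?_⟩
  -- summability of the translated families
  have hs1 : Summable (fun k : ℤ => 1 / br (s - k) ^ ν) :=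
    hsum.comp_injective (Equiv.subLeft s).injective
  have hs2 : Summable (fun k : ℤ => 1 / br (k - m) ^ ν) :=
    hsum.comp_injective (Equiv.subRight m).injective
  have ht1 : ∑' k : ℤ, 1 / br (s - k) ^ ν = C := (Equiv.subLeft s).tsum_eq (fun a => 1 / br a ^ ν)
  have ht2 : ∑' k : ℤ, 1 / br (k - m) ^ ν = C := (Equiv.subRight m).tsum_eq (fun a => 1 / br a ^ ν)
  have hRHS : Summable (fun k : ℤ =>
      Real.exp (-β * |((s - m : ℤ) : ℝ)|) * ((2 : ℝ) ^ ν / br (s - m) ^ ν)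
        * (1 / br (s - k) ^ ν + 1 / br (k - m) ^ ν)) :=
    ((hs1.add hs2).mul_left _)
  have hkey : ∀ k : ℤ,
      Real.exp (-β * |((s - k : ℤ) : ℝ)| - β * |((k - m : ℤ) : ℝ)|) /
          (br (s - k) ^ ν * br (k - m) ^ ν)
        ≤ Real.exp (-β * |((s - m : ℤ) : ℝ)|) * ((2 : ℝ) ^ ν / br (s - m) ^ ν)
            * (1 / br (s - k) ^ ν + 1 / br (k - m) ^ ν) := by
    intro k
    have := key_bound ν (by linarith) β hβ (s - k) (k - m)
    simpa using this
  have hLHS : Summable (fun k : ℤ =>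
      Real.exp (-β * |((s - k : ℤ) : ℝ)| - β * |((k - m : ℤ) : ℝ)|) /
          (br (s - k) ^ ν * br (k - m) ^ ν)) :=
    Summable.of_nonneg_of_le (fun k => div_nonneg (Real.exp_nonneg _) (mul_nonneg (br_rpow_pos ν _).le (br_rpow_pos ν _).le)) hkey hRHS
  calc ∑' k : ℤ, Real.exp (-β * |((s - k : ℤ) : ℝ)| - β * |((k - m : ℤ) : ℝ)|) /
          (br (s - k) ^ ν * br (k - m) ^ ν)
      ≤ ∑' k : ℤ, Real.exp (-β * |((s - m : ℤ) : ℝ)|) * ((2 : ℝ) ^ ν / br (s - m) ^ ν)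
            * (1 / br (s - k) ^ ν + 1 / br (k - m) ^ ν) :=
        Summable.tsum_le_tsum hkey hLHS hRHS
    _ = Real.exp (-β * |((s - m : ℤ) : ℝ)|) * ((2 : ℝ) ^ ν / br (s - m) ^ ν) * (2 * C) := by
        rw [tsum_mul_left, Summable.tsum_add hs1 hs2, ht1, ht2]; ring
    _ = 2 ^ ν * (2 * C) * Real.exp (-β * |((s - m : ℤ) : ℝ)|) / br (s - m) ^ ν := by
        ring
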